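/- For all integers n ≥ 2 and k ≥ 2, the number of labeled rooted plane k-ary trees on n nodes equals (kn)(kn−1)⋯(kn−n+2) = ∏_{i=0}^{n−2}(kn−i), i.e. the number of injective functions from {1,…,n−1} to {1,…,kn}. -/

import Mathlib

/-- A labeled rooted plane `k`-ary tree on `n` nodes (labels `Fin n`,
standing for `{1,…,n}`): a root `r` together with an injective map `par`
assigning to each non-root vertex `v` a pair `(p, i)` meaning that `v` is the
`i`-th child of `p`, such that from every vertex, iterating the parent map
eventually reaches the root. -/
structure PlaneTree (n k : ℕ) where
  root : Fin n
  par : {v : Fin n // v ≠ root} → Fin n × Fin k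
  par_inj : Function.Injective par
  reach : ∀ v : Fin n, ∃ m : ℕ,
    (fun u : Fin n => if h : u = root then root else (par ⟨u, h⟩).1)^[m] v = root

namespace PTaux
variable {n k : ℕ}

/-- the parent map, fixing the root -/
def pf (t : PlaneTree n k) : Fin n → Fin n :=
  fun u => if h : u = t.root then t.root else (t.par ⟨u, h⟩).1

lemma reach' (t : PlaneTree n k) (v : Fin n) : ∃ m, (pf t)^[m] v = t.root := t.reach v

lemma pf_root (t : PlaneTree n k) : pf t t.root = t.root := dif_pos rfl

lemma pf_ne (t : PlaneTree n k) {v : Fin n} (h : v ≠ t.root) :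
    pf t v = (t.par ⟨v, h⟩).1 := dif_neg h

noncomputable def dep (t : PlaneTree n k) (v : Fin n) : ℕ :=
  Nat.find (reach' t v)

lemma iterate_dep (t : PlaneTree n k) (v : Fin n) : (pf t)^[dep t v] v = t.root :=
  Nat.find_spec (reach' t v)

lemma dep_pf_lt (t : PlaneTree n k) {v : Fin n} (h : v ≠ t.root) :
    dep t (pf t v) < dep t v := by
  have h0 : dep t v ≠ 0 := by
    intro h0
    have := iterate_dep t v
    rw [h0] at this
    exact h this
  obtain ⟨m, hm⟩ : ∃ m, dep t v = m + 1 := ⟨dep t v - 1, by omega⟩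
  have hs : (pf t)^[m] (pf t v) = t.root := by
    have := iterate_dep t v
    rwa [hm, Function.iterate_succ_apply] at this
  have : dep t (pf t v) ≤ m := Nat.find_le hs
  omega

/-- custom induction along depth -/
lemma dep_induction (t : PlaneTree n k) {P : Fin n → Prop}
    (hroot : P t.root)
    (hstep : ∀ v, v ≠ t.root → P (pf t v) → P v) : ∀ v, P v := by
  suffices H : ∀ m v, dep t v = m → P v from fun v => H _ v rfl
  intro m
  induction m using Nat.strong_induction_on with
  | _ m ih =>
    intro v hd
    by_cases h : v = t.root
    · exact h ▸ hroot
    · exact hstep v h (ih _ (hd ▸ dep_pf_lt t h) _ rfl)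

/-- the key function: base-`k` encoding of the path from the root -/
noncomputable def KK (t : PlaneTree n k) (v : Fin n) : ℕ :=
  if h : v = t.root then 1
  else k * KK t (t.par ⟨v, h⟩).1 + ((t.par ⟨v, h⟩).2 : ℕ)
termination_by dep t v
decreasing_by
  have := dep_pf_lt t h
  rwa [pf_ne t h] at this

lemma KK_root (t : PlaneTree n k) : KK t t.root = 1 := by rw [KK]; simp

lemma KK_ne (t : PlaneTree n k) {v : Fin n} (h : v ≠ t.root) :
    KK t v = k * KK t (pf t v) + ((t.par ⟨v, h⟩).2 : ℕ) := by
  rw [KK, dif_neg h, pf_ne t h]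

lemma KK_pos (t : PlaneTree n k) (v : Fin n) : 0 < KK t v := by
  induction v using dep_induction t with
  | hroot => rw [KK_root]; norm_num
  | hstep v h ih =>
    rw [KK_ne t h]
    have hk0 : 0 < k := (t.par ⟨v, h⟩).2.pos
    positivity

lemma KK_ge (t : PlaneTree n k) (hk : 2 ≤ k) {v : Fin n} (h : v ≠ t.root) :
    2 ≤ KK t v := by
  rw [KK_ne t h]
  have := KK_pos t (pf t v)
  nlinarith

lemma KK_pf_lt (t : PlaneTree n k) (hk : 2 ≤ k) {v : Fin n} (h : v ≠ t.root) :
    KK t (pf t v) < KK t v := by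
  rw [KK_ne t h]
  have := KK_pos t (pf t v)
  nlinarith

lemma KK_inj (t : PlaneTree n k) (hk : 2 ≤ k) :
    Function.Injective (KK t) := by
  suffices H : ∀ m v w, dep t v ≤ m → KK t v = KK t w → v = w from
    fun v w h => H (dep t v) v w le_rfl h
  intro m
  induction m using Nat.strong_induction_on with
  | _ m ih =>
    intro v w hdm hK
    by_cases hv : v = t.root
    · by_cases hw : w = t.root
      · rw [hv, hw]
      · exfalso
        have := KK_ge t hk hw
        rw [hv, KK_root] at hK
        omega
    · by_cases hw : w = t.root
      · exfalso
        have := KK_ge t hk hv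
        rw [hw, KK_root] at hK
        omega
      · rw [KK_ne t hv, KK_ne t hw] at hK
        have hk0 : 0 < k := by omega
        have hiv : ((t.par ⟨v, hv⟩).2 : ℕ) < k := (t.par ⟨v, hv⟩).2.isLt
        have hiw : ((t.par ⟨w, hw⟩).2 : ℕ) < k := (t.par ⟨w, hw⟩).2.isLt
        have hmod : ((t.par ⟨v, hv⟩).2 : ℕ) = ((t.par ⟨w, hw⟩).2 : ℕ) := by
          have := congrArg (· % k) hK
          simpa [Nat.mul_add_mod, Nat.mod_eq_of_lt hiv, Nat.mod_eq_of_lt hiw] using this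
        have hdiv : KK t (pf t v) = KK t (pf t w) := by
          have := congrArg (· / k) hK
          simpa [Nat.mul_add_div hk0, Nat.div_eq_of_lt hiv, Nat.div_eq_of_lt hiw] using this
        have hdep : dep t (pf t v) < m := by
          have := dep_pf_lt t hv
          omega
        have hpf : pf t v = pf t w := ih _ hdep _ _ (by omega) hdiv
        have hpar : t.par ⟨v, hv⟩ = t.par ⟨w, hw⟩ := by
          apply Prod.ext
          · rw [← pf_ne t hv, ← pf_ne t hw, hpf]
          · exact Fin.ext hmod
        have := t.par_inj hpar
        exact Subtype.ext_iff.1 this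

end PTaux


namespace PTaux
variable {n k : ℕ}

/-- Validity predicate of a slot set. -/
def ValidF (n k : ℕ) (T : Finset ℕ) : Prop := ∀ m < n, m ≤ (T.filter (· < k * m)).card

/-- rank of a vertex by its key -/
noncomputable def rk (t : PlaneTree n k) (v : Fin n) : ℕ :=
  (Finset.univ.filter (fun w => KK t w < KK t v)).card

lemma rk_lt (t : PlaneTree n k) (v : Fin n) : rk t v < n := by
  have hsub : Finset.univ.filter (fun w => KK t w < KK t v) ⊆ Finset.univ.erase v := by
    intro w hw
    simp only [Finset.mem_filter] at hw
    apply Finset.mem_erase.2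
    refine ⟨fun he => ?_, Finset.mem_univ w⟩
    rw [he] at hw
    omega
  have h1 := Finset.card_le_card hsub
  have h2 : (Finset.univ.erase v).card = n - 1 := by
    rw [Finset.card_erase_of_mem (Finset.mem_univ v)]
    simp
  have hn : 0 < n := v.pos
  have h3 : rk t v = (Finset.univ.filter (fun w => KK t w < KK t v)).card := rfl
  omega

lemma rk_lt_rk_of (t : PlaneTree n k) {v w : Fin n} (h : KK t v < KK t w) :
    rk t v < rk t w := by
  apply Finset.card_lt_card
  have hsub : Finset.univ.filter (fun u => KK t u < KK t v) ⊆
      Finset.univ.filter (fun u => KK t u < KK t w) := by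
    intro x hx
    simp only [Finset.mem_filter] at hx ⊢
    exact ⟨hx.1, by omega⟩
  refine (Finset.ssubset_iff_of_subset hsub).2
    ⟨v, Finset.mem_filter.2 ⟨Finset.mem_univ v, h⟩, fun hc => ?_⟩
  simp only [Finset.mem_filter] at hc
  omega

lemma rk_lt_rk_iff (t : PlaneTree n k) (hk : 2 ≤ k) {v w : Fin n} :
    rk t v < rk t w ↔ KK t v < KK t w := by
  constructor
  · intro h
    rcases lt_trichotomy (KK t v) (KK t w) with h' | h' | h'
    · exact h'
    · exfalso; rw [KK_inj t hk h'] at h; omega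
    · exfalso; have := rk_lt_rk_of t h'; omega
  · exact rk_lt_rk_of t

lemma rk_inj (t : PlaneTree n k) (hk : 2 ≤ k) {v w : Fin n}
    (h : rk t v = rk t w) : v = w := by
  apply KK_inj t hk
  rcases lt_trichotomy (KK t v) (KK t w) with h' | h' | h'
  · exfalso; have := rk_lt_rk_of t h'; omega
  · exact h'
  · exfalso; have := rk_lt_rk_of t h'; omega

/-- the rank map as a function Fin n → Fin n -/
noncomputable def rkF (t : PlaneTree n k) : Fin n → Fin n := fun v => ⟨rk t v, rk_lt t v⟩

lemma rkF_bij (t : PlaneTree n k) (hk : 2 ≤ k) : Function.Bijective (rkF t) :=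
  Finite.injective_iff_bijective.1 (fun v w h => rk_inj t hk (by
    have := congrArg Fin.val h
    exact this))

/-- the rank permutation -/
noncomputable def sigmaE (t : PlaneTree n k) (hk : 2 ≤ k) : Equiv.Perm (Fin n) :=
  Equiv.ofBijective (rkF t) (rkF_bij t hk)

lemma sigmaE_apply (t : PlaneTree n k) (hk : 2 ≤ k) (v : Fin n) :
    (sigmaE t hk v : ℕ) = rk t v := rfl

lemma rk_root (t : PlaneTree n k) : rk t t.root = 0 := by
  rw [rk, Finset.card_eq_zero, Finset.filter_eq_empty_iff]
  intro w _
  have := KK_pos t w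
  rw [KK_root]
  omega

lemma rk_pos (t : PlaneTree n k) (hk : 2 ≤ k) {v : Fin n} (h : v ≠ t.root) :
    0 < rk t v := by
  apply Finset.card_pos.2
  exact ⟨t.root, Finset.mem_filter.2 ⟨Finset.mem_univ _, by
    rw [KK_root]; exact KK_ge t hk h⟩⟩

lemma rk_pf_lt (t : PlaneTree n k) (hk : 2 ≤ k) {v : Fin n} (h : v ≠ t.root) :
    rk t (pf t v) < rk t v := rk_lt_rk_of t (KK_pf_lt t hk h)

/-- the slot value of a non-root vertex -/
noncomputable def slotN (t : PlaneTree n k) (v : Fin n) : ℕ :=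
  if h : v = t.root then 0 else k * rk t (pf t v) + ((t.par ⟨v, h⟩).2 : ℕ)

lemma slotN_ne (t : PlaneTree n k) {v : Fin n} (h : v ≠ t.root) :
    slotN t v = k * rk t (pf t v) + ((t.par ⟨v, h⟩).2 : ℕ) := dif_neg h

/-- the slot set of a tree -/
noncomputable def TsetT (t : PlaneTree n k) : Finset ℕ :=
  (Finset.univ.filter (· ≠ t.root)).image (slotN t)

lemma slotN_lt (t : PlaneTree n k) {v : Fin n} (h : v ≠ t.root) :
    slotN t v < k * n := by
  rw [slotN_ne t h]
  have h1 : rk t (pf t v) < n := rk_lt t _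
  have h2 : ((t.par ⟨v, h⟩).2 : ℕ) < k := (t.par ⟨v, h⟩).2.isLt
  nlinarith

lemma slotN_inj (t : PlaneTree n k) (hk : 2 ≤ k) {v w : Fin n}
    (hv : v ≠ t.root) (hw : w ≠ t.root) (h : slotN t v = slotN t w) : v = w := by
  rw [slotN_ne t hv, slotN_ne t hw] at h
  have hk0 : 0 < k := by omega
  have hiv : ((t.par ⟨v, hv⟩).2 : ℕ) < k := (t.par ⟨v, hv⟩).2.isLt
  have hiw : ((t.par ⟨w, hw⟩).2 : ℕ) < k := (t.par ⟨w, hw⟩).2.isLt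
  have hmod : ((t.par ⟨v, hv⟩).2 : ℕ) = ((t.par ⟨w, hw⟩).2 : ℕ) := by
    have := congrArg (· % k) h
    simpa [Nat.mul_add_mod, Nat.mod_eq_of_lt hiv, Nat.mod_eq_of_lt hiw] using this
  have hdiv : rk t (pf t v) = rk t (pf t w) := by
    have := congrArg (· / k) h
    simpa [Nat.mul_add_div hk0, Nat.div_eq_of_lt hiv, Nat.div_eq_of_lt hiw] using this
  have hpf : pf t v = pf t w := rk_inj t hk hdiv
  have hpar : t.par ⟨v, hv⟩ = t.par ⟨w, hw⟩ := by
    apply Prod.ext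
    · rw [← pf_ne t hv, ← pf_ne t hw, hpf]
    · exact Fin.ext hmod
  exact Subtype.ext_iff.1 (t.par_inj hpar)

lemma TsetT_card (t : PlaneTree n k) (hk : 2 ≤ k) : (TsetT t).card = n - 1 := by
  rw [TsetT, Finset.card_image_of_injOn]
  · rw [Finset.filter_ne', Finset.card_erase_of_mem (Finset.mem_univ _)]
    simp
  · intro v hv w hw h
    simp only [Finset.mem_coe, Finset.mem_filter] at hv hw
    exact slotN_inj t hk hv.2 hw.2 h

lemma TsetT_subset (t : PlaneTree n k) {x : ℕ} (hx : x ∈ TsetT t) : x < k * n := by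
  rw [TsetT, Finset.mem_image] at hx
  obtain ⟨v, hv, rfl⟩ := hx
  simp only [Finset.mem_filter] at hv
  exact slotN_lt t hv.2

lemma TsetT_valid (t : PlaneTree n k) (hk : 2 ≤ k) : ValidF n k (TsetT t) := by
  intro m hm
  classical
  set A : Finset (Fin n) := Finset.univ.filter (fun v => 0 < rk t v ∧ rk t v ≤ m) with hA
  have hAcard : A.card = m := by
    have hbij : A.card = (Finset.Icc 1 m).card := by
      apply Finset.card_nbij (i := fun v => rk t v)
      all_goals rw [hA]
      · intro v hv
        simp only [Finset.mem_coe, Finset.mem_filter] at hv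
        simp only [Finset.mem_coe, Finset.mem_Icc]
        omega
      · intro v hv w hw h
        simp only [Finset.mem_coe, Finset.mem_filter] at hv hw
        exact rk_inj t hk h
      · intro x hx
        simp only [Finset.coe_Icc, Set.mem_Icc] at hx
        have hxn : x < n := by omega
        have hs := (rkF_bij t hk).2 ⟨x, hxn⟩
        obtain ⟨v, hv⟩ := hs
        have hvx : rk t v = x := by
          have := congrArg Fin.val hv
          exact this
        refine ⟨v, ?_, hvx⟩
        simp only [Finset.coe_filter, Set.mem_setOf_eq, Finset.mem_univ, true_and]
        omega
    rw [Nat.card_Icc] at hbij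
    omega
  have hmap : ∀ v ∈ A, slotN t v ∈ (TsetT t).filter (· < k * m) := by
    intro v hv
    simp only [hA, Finset.mem_filter] at hv
    have hvroot : v ≠ t.root := by
      intro h
      rw [h, rk_root] at hv
      omega
    apply Finset.mem_filter.2
    constructor
    · exact Finset.mem_image.2 ⟨v, Finset.mem_filter.2 ⟨Finset.mem_univ _, hvroot⟩, rfl⟩
    · have h1 : rk t (pf t v) < rk t v := rk_pf_lt t hk hvroot
      have h2 : ((t.par ⟨v, hvroot⟩).2 : ℕ) < k := (t.par ⟨v, hvroot⟩).2.isLt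
      rw [slotN_ne t hvroot]
      have : rk t v ≤ m := hv.2.2
      nlinarith
  calc m = A.card := hAcard.symm
    _ ≤ ((TsetT t).filter (· < k * m)).card := by
        apply Finset.card_le_card_of_injOn (slotN t) hmap
        intro v hv w hw h
        simp only [Finset.mem_coe, hA, Finset.mem_filter] at hv hw
        have hvroot : v ≠ t.root := fun hh => by rw [hh, rk_root] at hv; omega
        have hwroot : w ≠ t.root := fun hh => by rw [hh, rk_root] at hw; omega
        exact slotN_inj t hk hvroot hwroot h

end PTaux

namespace PTaux
variable {n k : ℕ}

/-- rank is strictly monotone on members -/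
lemma rank_strict {T : Finset ℕ} {x y : ℕ} (hx : x ∈ T) (hxy : x < y) :
    (T.filter (· < x)).card < (T.filter (· < y)).card := by
  apply Finset.card_lt_card
  have hsub : T.filter (· < x) ⊆ T.filter (· < y) := by
    intro z hz
    simp only [Finset.mem_filter] at hz ⊢
    exact ⟨hz.1, by omega⟩
  refine (Finset.ssubset_iff_of_subset hsub).2 ⟨x, Finset.mem_filter.2 ⟨hx, hxy⟩, fun hc => ?_⟩
  simp only [Finset.mem_filter] at hc
  omega

lemma rank_inj_mem {T : Finset ℕ} {x y : ℕ} (hx : x ∈ T) (hy : y ∈ T)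
    (h : (T.filter (· < x)).card = (T.filter (· < y)).card) : x = y := by
  rcases lt_trichotomy x y with h' | h' | h'
  · exact absurd h (by have := rank_strict hx h'; omega)
  · exact h'
  · exact absurd h (by have := rank_strict hy h'; omega)

lemma card_filter_lt_fin {m : ℕ} (j : Fin m) :
    (Finset.univ.filter (fun i : Fin m => i < j)).card = (j : ℕ) := by
  have : (Finset.univ.filter (fun i : Fin m => i < j)).card = (Finset.range (j : ℕ)).card := by
    apply Finset.card_nbij (i := fun (i : Fin m) => (i : ℕ))
    · intro i hi
      simp only [Finset.mem_coe, Finset.mem_filter] at hi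
      simp only [Finset.mem_coe, Finset.mem_range]
      exact hi.2
    · intro a _ b _ h
      exact Fin.ext h
    · intro x hx
      simp only [Finset.coe_range, Set.mem_Iio] at hx
      have hxm : x < m := lt_trans hx j.isLt
      refine ⟨⟨x, hxm⟩, ?_, rfl⟩
      simp only [Finset.coe_filter, Set.mem_setOf_eq, Finset.mem_univ, true_and]
      exact hx
  rw [this, Finset.card_range]

lemma oi_rank {T : Finset ℕ} {m : ℕ} (h : T.card = m) (j : Fin m) :
    (T.filter (· < (T.orderIsoOfFin h j : ℕ))).card = (j : ℕ) := by
  classical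
  rw [← card_filter_lt_fin j]
  symm
  apply Finset.card_nbij (i := fun i => (T.orderIsoOfFin h i : ℕ))
  · intro i hi
    simp only [Finset.mem_coe, Finset.mem_filter] at hi
    simp only [Finset.mem_coe, Finset.mem_filter]
    refine ⟨(T.orderIsoOfFin h i).2, ?_⟩
    have : T.orderIsoOfFin h i < T.orderIsoOfFin h j := (T.orderIsoOfFin h).lt_iff_lt.2 hi.2
    exact this
  · intro a _ b _ hab
    have : T.orderIsoOfFin h a = T.orderIsoOfFin h b := Subtype.ext hab
    exact (T.orderIsoOfFin h).injective this
  · intro y hy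
    simp only [Finset.coe_filter, Set.mem_setOf_eq] at hy
    refine ⟨(T.orderIsoOfFin h).symm ⟨y, hy.1⟩, ?_, ?_⟩
    · simp only [Finset.coe_filter, Set.mem_setOf_eq, Finset.mem_univ, true_and]
      have : T.orderIsoOfFin h ((T.orderIsoOfFin h).symm ⟨y, hy.1⟩) < T.orderIsoOfFin h j := by
        rw [OrderIso.apply_symm_apply]
        exact Subtype.mk_lt_mk.2 hy.2
      exact (T.orderIsoOfFin h).lt_iff_lt.1 this
    · simp only [OrderIso.apply_symm_apply]

lemma oi_eq_of_rank {T : Finset ℕ} {m : ℕ} (h : T.card = m) {x : ℕ} (hx : x ∈ T) (j : Fin m)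
    (hr : (T.filter (· < x)).card = (j : ℕ)) : (T.orderIsoOfFin h j : ℕ) = x := by
  apply rank_inj_mem (T.orderIsoOfFin h j).2 hx
  rw [oi_rank h j, hr]

end PTaux

namespace PTaux
variable {n k : ℕ}

lemma valid_oi {T : Finset ℕ} (hV : ValidF n k T) (hT : T.card = n - 1)
    (hn : 2 ≤ n) (j : Fin (n - 1)) :
    (T.orderIsoOfFin hT j : ℕ) < k * ((j : ℕ) + 1) := by
  by_contra hc
  push_neg at hc
  have hm : (j : ℕ) + 1 < n := by have := j.isLt; omega
  have h1 := hV ((j : ℕ) + 1) hm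
  have hsub : T.filter (· < k * ((j : ℕ) + 1)) ⊆
      T.filter (· < (T.orderIsoOfFin hT j : ℕ)) := by
    intro y hy
    simp only [Finset.mem_filter] at hy ⊢
    exact ⟨hy.1, by omega⟩
  have := Finset.card_le_card hsub
  rw [oi_rank hT j] at this
  omega

/-- base-k lexicographic comparison -/
lemma lexbase {a a' i i' : ℕ} (hi : i < k) (hi' : i' < k) :
    k * a + i < k * a' + i' ↔ (a < a' ∨ (a = a' ∧ i < i')) := by
  constructor
  · intro h
    rcases lt_trichotomy a a' with h' | h' | h'
    · exact Or.inl h'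
    · refine Or.inr ⟨h', ?_⟩; subst h'; omega
    · exfalso; nlinarith
  · rintro (h' | ⟨rfl, h'⟩)
    · nlinarith
    · omega

/-- a parent assignment with decreasing labels reaches the root -/
lemma reach_of_desc {r : Fin n} (g : {v : Fin n // v ≠ r} → Fin n × Fin k)
    (hr : (r : ℕ) = 0)
    (hdesc : ∀ (v : Fin n) (h : v ≠ r), ((g ⟨v, h⟩).1 : ℕ) < (v : ℕ)) :
    ∀ v : Fin n, ∃ m : ℕ,
      (fun u : Fin n => if h : u = r then r else (g ⟨u, h⟩).1)^[m] v = r := by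
  set f : Fin n → Fin n := fun u => if h : u = r then r else (g ⟨u, h⟩).1 with hf
  suffices H : ∀ m (v : Fin n), (v : ℕ) ≤ m → f^[m] v = r from fun v => ⟨(v : ℕ), H _ v le_rfl⟩
  intro m
  induction m with
  | zero =>
    intro v hv
    have : v = r := Fin.ext (by omega)
    simpa using this
  | succ m ih =>
    intro v hv
    by_cases h : v = r
    · subst h
      have hfr : f v = v := by rw [hf]; simp
      rw [Function.iterate_succ_apply, hfr]
      exact ih v (by omega)
    · have hfv : f v = (g ⟨v, h⟩).1 := by rw [hf]; simp [h]
      have hlt := hdesc v h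
      rw [Function.iterate_succ_apply, hfv]
      exact ih _ (by omega)

/-- index of a nonzero label in `Fin (n-1)` -/
def jdx (hn : 2 ≤ n) (v : Fin n) : Fin (n - 1) :=
  ⟨(v : ℕ) - 1, by have := v.isLt; omega⟩

/-- slot value assigned to a label by a slot set -/
noncomputable def sv (hn : 2 ≤ n) (T : Finset ℕ) (hT : T.card = n - 1) (v : Fin n) : ℕ :=
  (T.orderIsoOfFin hT (jdx hn v) : ℕ)

lemma sv_lt {T : Finset ℕ} (hn : 2 ≤ n) (hT : T.card = n - 1) (hV : ValidF n k T)
    {v : Fin n} (hv : (v : ℕ) ≠ 0) : sv hn T hT v < k * (v : ℕ) := by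
  have hb := valid_oi hV hT hn (jdx hn v)
  have hj : ((jdx hn v : Fin (n-1)) : ℕ) = (v : ℕ) - 1 := rfl
  rw [hj] at hb
  have he : (v : ℕ) - 1 + 1 = (v : ℕ) := by omega
  rw [he] at hb
  exact hb

lemma sv_inj {T : Finset ℕ} (hn : 2 ≤ n) (hT : T.card = n - 1)
    {v w : Fin n} (hv : (v : ℕ) ≠ 0) (hw : (w : ℕ) ≠ 0)
    (h : sv hn T hT v = sv hn T hT w) : v = w := by
  have hj : jdx hn v = jdx hn w := (T.orderIsoOfFin hT).injective (Subtype.ext h)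
  have hval : (v : ℕ) - 1 = (w : ℕ) - 1 := congrArg Fin.val hj
  exact Fin.ext (by omega)

lemma sv_div_lt {T : Finset ℕ} (hn : 2 ≤ n) (hk : 2 ≤ k) (hT : T.card = n - 1)
    (hV : ValidF n k T) {v : Fin n} (hv : (v : ℕ) ≠ 0) :
    sv hn T hT v / k < (v : ℕ) := by
  have := sv_lt hn hT hV hv (k := k)
  exact Nat.div_lt_of_lt_mul this

/-- the canonical root -/
def rt (hn : 2 ≤ n) : Fin n := ⟨0, by omega⟩

/-- the canonical parent assignment of a valid slot set -/
noncomputable def parG (hn : 2 ≤ n) (hk : 2 ≤ k) (T : Finset ℕ) (hT : T.card = n - 1)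
    (hV : ValidF n k T) : {v : Fin n // v ≠ rt hn} → Fin n × Fin k := fun v =>
  (⟨sv hn T hT v.1 / k, by
      have h2 : (v.1 : ℕ) ≠ 0 := fun hc => v.2 (Fin.ext hc)
      have h3 := sv_div_lt hn hk hT hV h2
      have := v.1.isLt
      omega⟩,
   ⟨sv hn T hT v.1 % k, Nat.mod_lt _ (by omega)⟩)

/-- decode a valid slot set into its canonical tree -/
noncomputable def canon (hn : 2 ≤ n) (hk : 2 ≤ k) (T : Finset ℕ) (hT : T.card = n - 1)
    (hV : ValidF n k T) : PlaneTree n k where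
  root := rt hn
  par := parG hn hk T hT hV
  par_inj := by
    intro v w hvw
    simp only [parG, Prod.mk.injEq, Fin.mk.injEq] at hvw
    have h1 : sv hn T hT v.1 / k = sv hn T hT w.1 / k := hvw.1
    have h2 : sv hn T hT v.1 % k = sv hn T hT w.1 % k := hvw.2
    have hs : sv hn T hT v.1 = sv hn T hT w.1 := by
      have hv := Nat.div_add_mod (sv hn T hT v.1) k
      have hw := Nat.div_add_mod (sv hn T hT w.1) k
      rw [h1, h2] at hv
      omega
    have h2v : (v.1 : ℕ) ≠ 0 := fun hc => v.2 (Fin.ext hc)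
    have h2w : (w.1 : ℕ) ≠ 0 := fun hc => w.2 (Fin.ext hc)
    exact Subtype.ext (sv_inj hn hT h2v h2w hs)
  reach := by
    apply reach_of_desc (g := parG hn hk T hT hV) rfl
    intro v h
    have h2 : (v : ℕ) ≠ 0 := fun hc => h (Fin.ext hc)
    have := sv_div_lt hn hk hT hV h2 (T := T)
    simpa [parG] using this

end PTaux

namespace PTaux
variable {n k : ℕ}

section canonlemmas
variable (hn : 2 ≤ n) (hk : 2 ≤ k) (T : Finset ℕ) (hT : T.card = n - 1) (hV : ValidF n k T)

lemma canon_root : (canon hn hk T hT hV).root = rt hn := rfl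

lemma rt_val : ((rt hn : Fin n) : ℕ) = 0 := rfl

lemma canon_pf_val {v : Fin n} (h : v ≠ rt hn) :
    ((pf (canon hn hk T hT hV) v : Fin n) : ℕ) = sv hn T hT v / k := by
  rw [pf_ne (canon hn hk T hT hV) h]
  rfl

lemma canon_idx_val {v : Fin n} (h : v ≠ rt hn) :
    (((canon hn hk T hT hV).par ⟨v, h⟩).2 : ℕ) = sv hn T hT v % k := rfl

lemma sv_mem {v : Fin n} : sv hn T hT v ∈ T := (T.orderIsoOfFin hT (jdx hn v)).2

lemma canon_KK_mono : ∀ (w v : Fin n), v < w →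
    KK (canon hn hk T hT hV) v < KK (canon hn hk T hT hV) w := by
  set c := canon hn hk T hT hV with hc
  suffices H : ∀ m (w v : Fin n), (w : ℕ) = m → v < w → KK c v < KK c w from
    fun w v hvw => H (w : ℕ) w v rfl hvw
  intro m
  induction m using Nat.strong_induction_on with
  | _ m ih =>
    intro w v hm hvw
    have hwval : (w : ℕ) ≠ 0 := by
      have : (v : ℕ) < (w : ℕ) := hvw
      omega
    have hwr : w ≠ c.root := fun hh => hwval (by rw [hh]; rfl)
    by_cases hvr : v = c.root
    · rw [hvr, KK_root]
      exact KK_ge c hk hwr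
    · have hvval : (v : ℕ) ≠ 0 := fun hh => hvr (Fin.ext hh)
      -- slot values
      have hsv : sv hn T hT v < sv hn T hT w := by
        have hj : (jdx hn v : Fin (n-1)) < jdx hn w := by
          show ((jdx hn v : Fin (n-1)) : ℕ) < ((jdx hn w : Fin (n-1)) : ℕ)
          show (v : ℕ) - 1 < (w : ℕ) - 1
          have : (v : ℕ) < (w : ℕ) := hvw
          omega
        exact (T.orderIsoOfFin hT).lt_iff_lt.2 hj
      have hdv := Nat.div_add_mod (sv hn T hT v) k
      have hdw := Nat.div_add_mod (sv hn T hT w) k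
      have hk0 : 0 < k := by omega
      have hmodv : sv hn T hT v % k < k := Nat.mod_lt _ hk0
      have hmodw : sv hn T hT w % k < k := Nat.mod_lt _ hk0
      have hlex : sv hn T hT v / k < sv hn T hT w / k ∨
          (sv hn T hT v / k = sv hn T hT w / k ∧ sv hn T hT v % k < sv hn T hT w % k) := by
        rw [← lexbase hmodv hmodw]
        omega
      have hKv : KK c v = k * KK c (pf c v) + sv hn T hT v % k := by
        rw [KK_ne c hvr, canon_idx_val hn hk T hT hV hvr]
      have hKw : KK c w = k * KK c (pf c w) + sv hn T hT w % k := by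
        rw [KK_ne c hwr, canon_idx_val hn hk T hT hV hwr]
      rcases hlex with hlt | ⟨heq, hmod⟩
      · -- parents differ
        have hpw : ((pf c w : Fin n) : ℕ) = sv hn T hT w / k :=
          canon_pf_val hn hk T hT hV hwr
        have hpv : ((pf c v : Fin n) : ℕ) = sv hn T hT v / k :=
          canon_pf_val hn hk T hT hV hvr
        have hpwm : ((pf c w : Fin n) : ℕ) < m := by
          rw [hpw, ← hm]
          exact sv_div_lt hn hk hT hV hwval
        have hplt : pf c v < pf c w := by
          show ((pf c v : Fin n) : ℕ) < ((pf c w : Fin n) : ℕ)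
          omega
        have hKp : KK c (pf c v) < KK c (pf c w) := ih _ hpwm _ _ rfl hplt
        rw [hKv, hKw]
        rw [lexbase hmodv hmodw]
        exact Or.inl hKp
      · -- same parent
        have hpeq : pf c v = pf c w := by
          apply Fin.ext
          rw [canon_pf_val hn hk T hT hV hvr, canon_pf_val hn hk T hT hV hwr, heq]
        rw [hKv, hKw, hpeq]
        omega

lemma canon_rk (v : Fin n) : rk (canon hn hk T hT hV) v = (v : ℕ) := by
  set c := canon hn hk T hT hV with hc
  have hfil : Finset.univ.filter (fun w => KK c w < KK c v) =
      Finset.univ.filter (fun w => w < v) := by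
    apply Finset.filter_congr
    intro w _
    constructor
    · intro h
      rcases lt_trichotomy w v with h' | h' | h'
      · exact h'
      · exfalso; rw [h'] at h; omega
      · exfalso
        have h2 := canon_KK_mono hn hk T hT hV w v h'
        rw [← hc] at h2
        omega
    · exact canon_KK_mono hn hk T hT hV v w
  rw [rk, hfil, card_filter_lt_fin v]

lemma canon_slotN {v : Fin n} (h : v ≠ rt hn) :
    slotN (canon hn hk T hT hV) v = sv hn T hT v := by
  set c := canon hn hk T hT hV with hc
  have hroot : v ≠ c.root := h
  rw [slotN_ne c hroot, canon_idx_val hn hk T hT hV hroot]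
  have h1 : rk c (pf c v) = ((pf c v : Fin n) : ℕ) := canon_rk hn hk T hT hV _
  rw [h1, canon_pf_val hn hk T hT hV hroot]
  exact Nat.div_add_mod _ k

lemma canon_Tset : TsetT (canon hn hk T hT hV) = T := by
  set c := canon hn hk T hT hV with hc
  apply Finset.ext
  intro x
  constructor
  · intro hx
    rw [TsetT, Finset.mem_image] at hx
    obtain ⟨v, hv, rfl⟩ := hx
    simp only [Finset.mem_filter] at hv
    rw [canon_slotN hn hk T hT hV hv.2]
    exact sv_mem hn T hT
  · intro hx
    set j : Fin (n - 1) := (T.orderIsoOfFin hT).symm ⟨x, hx⟩ with hj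
    have hjlt : (j : ℕ) < n - 1 := j.isLt
    set v : Fin n := ⟨(j : ℕ) + 1, by omega⟩ with hv
    have hvr : v ≠ c.root := by
      intro hh
      have : (v : ℕ) = 0 := congrArg Fin.val hh
      simp [hv] at this
    have hjdx : jdx hn v = j := by
      apply Fin.ext
      show (v : ℕ) - 1 = (j : ℕ)
      simp [hv]
    have hsv : sv hn T hT v = x := by
      rw [sv, hjdx, hj]
      simp only [OrderIso.apply_symm_apply]
    rw [TsetT, Finset.mem_image]
    exact ⟨v, Finset.mem_filter.2 ⟨Finset.mem_univ _, hvr⟩, by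
      rw [canon_slotN hn hk T hT hV hvr, hsv]⟩

end canonlemmas
end PTaux

namespace PTaux
variable {n k : ℕ}

/-- relabel a tree by a permutation -/
def relabel (ρ : Equiv.Perm (Fin n)) (t : PlaneTree n k) : PlaneTree n k where
  root := ρ t.root
  par := fun v =>
    (ρ (t.par ⟨ρ.symm v.1, fun hh => v.2 (by rw [← Equiv.apply_symm_apply ρ v.1, hh])⟩).1,
     (t.par ⟨ρ.symm v.1, fun hh => v.2 (by rw [← Equiv.apply_symm_apply ρ v.1, hh])⟩).2)
  par_inj := by
    intro v w h
    simp only [Prod.mk.injEq] at h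
    have h1 : t.par ⟨ρ.symm v.1, _⟩ = t.par ⟨ρ.symm w.1, _⟩ :=
      Prod.ext (ρ.injective h.1) h.2
    have h2 := t.par_inj h1
    have h3 : ρ.symm v.1 = ρ.symm w.1 := congrArg Subtype.val h2
    exact Subtype.ext (ρ.symm.injective h3)
  reach := by
    intro v
    set f' : Fin n → Fin n := fun u =>
      if h : u = ρ t.root then ρ t.root
      else (ρ (t.par ⟨ρ.symm u, fun hh => h (by rw [← Equiv.apply_symm_apply ρ u, hh])⟩).1)
    have hconj : ∀ x, f' x = ρ (pf t (ρ.symm x)) := by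
      intro x
      by_cases hx : x = ρ t.root
      · subst hx
        have : ρ.symm (ρ t.root) = t.root := Equiv.symm_apply_apply ρ t.root
        rw [this, pf_root]
        simp [f']
      · have hx' : ρ.symm x ≠ t.root := fun hh => hx (by rw [← Equiv.apply_symm_apply ρ x, hh])
        rw [pf_ne t hx']
        simp only [f', dif_neg hx]
    have hiter : ∀ m x, f'^[m] x = ρ ((pf t)^[m] (ρ.symm x)) := by
      intro m
      induction m with
      | zero => intro x; simp
      | succ m ih =>
        intro x
        rw [Function.iterate_succ_apply, Function.iterate_succ_apply, hconj, ih,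
          Equiv.symm_apply_apply]
    refine ⟨dep t (ρ.symm v), ?_⟩
    show f'^[dep t (ρ.symm v)] v = ρ t.root
    rw [hiter, iterate_dep]

lemma relabel_root (ρ : Equiv.Perm (Fin n)) (t : PlaneTree n k) :
    (relabel ρ t).root = ρ t.root := rfl

lemma relabel_par (ρ : Equiv.Perm (Fin n)) (t : PlaneTree n k) {v : Fin n}
    (h : v ≠ t.root) (h' : ρ v ≠ (relabel ρ t).root) :
    (relabel ρ t).par ⟨ρ v, h'⟩ = (ρ (t.par ⟨v, h⟩).1, (t.par ⟨v, h⟩).2) := by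
  simp only [relabel, Equiv.symm_apply_apply]

lemma pf_relabel (ρ : Equiv.Perm (Fin n)) (t : PlaneTree n k) (x : Fin n) :
    pf (relabel ρ t) x = ρ (pf t (ρ.symm x)) := by
  by_cases hx : x = ρ t.root
  · subst hx
    rw [Equiv.symm_apply_apply, pf_root t]
    rw [show ρ t.root = (relabel ρ t).root from rfl, pf_root]
  · have hx' : ρ.symm x ≠ t.root := fun hh => hx (by rw [← Equiv.apply_symm_apply ρ x, hh])
    have hxr : x ≠ (relabel ρ t).root := hx
    rw [pf_ne _ hxr, pf_ne t hx']
    simp only [relabel]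

lemma KK_relabel (ρ : Equiv.Perm (Fin n)) (t : PlaneTree n k) :
    ∀ v, KK (relabel ρ t) (ρ v) = KK t v := by
  intro v
  induction v using dep_induction t with
  | hroot =>
    rw [KK_root t, show ρ t.root = (relabel ρ t).root from rfl, KK_root]
  | hstep v h ih =>
    have hv' : ρ v ≠ (relabel ρ t).root := fun hh => h (ρ.injective hh)
    rw [KK_ne (relabel ρ t) hv', KK_ne t h]
    have hpf : pf (relabel ρ t) (ρ v) = ρ (pf t v) := by
      rw [pf_relabel, Equiv.symm_apply_apply]
    rw [hpf]
    have hidx : ((relabel ρ t).par ⟨ρ v, hv'⟩).2 = (t.par ⟨v, h⟩).2 := by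
      rw [relabel_par ρ t h hv']
    rw [hidx, ih]

lemma rk_relabel (ρ : Equiv.Perm (Fin n)) (t : PlaneTree n k) (v : Fin n) :
    rk (relabel ρ t) (ρ v) = rk t v := by
  rw [rk, rk]
  symm
  apply Finset.card_nbij (i := fun u => ρ u)
  · intro u hu
    simp only [Finset.mem_coe, Finset.mem_filter] at hu ⊢
    refine ⟨Finset.mem_univ _, ?_⟩
    rw [KK_relabel, KK_relabel]
    exact hu.2
  · intro a _ b _ hab
    exact ρ.injective hab
  · intro w hw
    have hw' : KK (relabel ρ t) w < KK (relabel ρ t) (ρ v) := by simpa using hw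
    refine ⟨ρ.symm w, ?_, Equiv.apply_symm_apply ρ w⟩
    have h1 : KK (relabel ρ t) (ρ (ρ.symm w)) = KK t (ρ.symm w) := KK_relabel ρ t _
    rw [Equiv.apply_symm_apply] at h1
    have h2 : KK (relabel ρ t) (ρ v) = KK t v := KK_relabel ρ t v
    simp only [Finset.coe_filter, Set.mem_setOf_eq, Finset.mem_univ, true_and]
    omega

lemma slotN_relabel (ρ : Equiv.Perm (Fin n)) (t : PlaneTree n k) {v : Fin n}
    (h : v ≠ t.root) : slotN (relabel ρ t) (ρ v) = slotN t v := by
  have hv' : ρ v ≠ (relabel ρ t).root := fun hh => h (ρ.injective hh)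
  rw [slotN_ne _ hv', slotN_ne t h]
  have hpf : pf (relabel ρ t) (ρ v) = ρ (pf t v) := by
    rw [pf_relabel, Equiv.symm_apply_apply]
  rw [hpf, rk_relabel]
  have hidx : ((relabel ρ t).par ⟨ρ v, hv'⟩).2 = (t.par ⟨v, h⟩).2 := by
    rw [relabel_par ρ t h hv']
  rw [hidx]

lemma Tset_relabel (ρ : Equiv.Perm (Fin n)) (t : PlaneTree n k) :
    TsetT (relabel ρ t) = TsetT t := by
  apply Finset.ext
  intro x
  rw [TsetT, TsetT, Finset.mem_image, Finset.mem_image]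
  constructor
  · rintro ⟨w, hw, rfl⟩
    simp only [Finset.mem_filter] at hw
    have hw' : ρ.symm w ≠ t.root := fun hh => hw.2 (by rw [← Equiv.apply_symm_apply ρ w, hh]; rfl)
    refine ⟨ρ.symm w, Finset.mem_filter.2 ⟨Finset.mem_univ _, hw'⟩, ?_⟩
    have := slotN_relabel ρ t hw'
    rw [Equiv.apply_symm_apply] at this
    exact this.symm
  · rintro ⟨u, hu, rfl⟩
    simp only [Finset.mem_filter] at hu
    have hu' : ρ u ≠ (relabel ρ t).root := fun hh => hu.2 (ρ.injective hh)
    exact ⟨ρ u, Finset.mem_filter.2 ⟨Finset.mem_univ _, hu'⟩, slotN_relabel ρ t hu.2⟩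

end PTaux

namespace PTaux
variable {n k : ℕ}

lemma slot_lt_iff (t : PlaneTree n k) (hk : 2 ≤ k) {v w : Fin n}
    (hv : v ≠ t.root) (hw : w ≠ t.root) :
    slotN t w < slotN t v ↔ rk t w < rk t v := by
  have hk0 : 0 < k := by omega
  have hiv : ((t.par ⟨v, hv⟩).2 : ℕ) < k := (t.par ⟨v, hv⟩).2.isLt
  have hiw : ((t.par ⟨w, hw⟩).2 : ℕ) < k := (t.par ⟨w, hw⟩).2.isLt
  rw [slotN_ne t hv, slotN_ne t hw, rk_lt_rk_iff t hk, KK_ne t hv, KK_ne t hw,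
    lexbase hiw hiv, lexbase hiw hiv]
  constructor
  · rintro (h | ⟨heq, hlt⟩)
    · exact Or.inl ((rk_lt_rk_iff t hk).1 h)
    · exact Or.inr ⟨congrArg (KK t) (rk_inj t hk heq), hlt⟩
  · rintro (h | ⟨heq, hlt⟩)
    · exact Or.inl ((rk_lt_rk_iff t hk).2 h)
    · exact Or.inr ⟨congrArg (rk t) (KK_inj t hk heq), hlt⟩

lemma slot_rank (t : PlaneTree n k) (hk : 2 ≤ k) {v : Fin n} (h : v ≠ t.root) :
    ((TsetT t).filter (· < slotN t v)).card = rk t v - 1 := by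
  have h1 : ((TsetT t).filter (· < slotN t v)).card =
      (Finset.univ.filter (fun w : Fin n => w ≠ t.root ∧ slotN t w < slotN t v)).card := by
    symm
    apply Finset.card_nbij (i := slotN t)
    · intro w hw
      simp only [Finset.mem_coe, Finset.mem_filter] at hw ⊢
      exact ⟨Finset.mem_image.2 ⟨w, Finset.mem_filter.2 ⟨Finset.mem_univ _, hw.2.1⟩, rfl⟩,
        hw.2.2⟩
    · intro a ha b hb hab
      simp only [Finset.mem_coe, Finset.mem_filter] at ha hb
      exact slotN_inj t hk ha.2.1 hb.2.1 hab
    · intro x hx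
      simp only [Finset.coe_filter, Set.mem_setOf_eq] at hx
      obtain ⟨hx1, hx2⟩ := hx
      rw [TsetT, Finset.mem_image] at hx1
      obtain ⟨w, hw, rfl⟩ := hx1
      simp only [Finset.mem_filter] at hw
      refine ⟨w, ?_, rfl⟩
      simp only [Finset.coe_filter, Set.mem_setOf_eq, Finset.mem_univ, true_and]
      exact ⟨hw.2, hx2⟩
  rw [h1]
  have h2 : (Finset.univ.filter (fun w : Fin n => w ≠ t.root ∧ slotN t w < slotN t v)).card =
      (Finset.Ico 1 (rk t v)).card := by
    apply Finset.card_nbij (i := rk t)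
    · intro w hw
      simp only [Finset.mem_coe, Finset.mem_filter] at hw
      simp only [Finset.mem_coe, Finset.mem_Ico]
      exact ⟨rk_pos t hk hw.2.1, (slot_lt_iff t hk h hw.2.1).1 hw.2.2⟩
    · intro a ha b hb hab
      simp only [Finset.mem_coe, Finset.mem_filter] at ha hb
      exact rk_inj t hk hab
    · intro x hx
      simp only [Finset.coe_Ico, Set.mem_Ico] at hx
      have hxn : x < n := lt_trans hx.2 (rk_lt t v)
      obtain ⟨w, hw⟩ := (rkF_bij t hk).2 ⟨x, hxn⟩
      have hwx : rk t w = x := congrArg Fin.val hw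
      have hwr : w ≠ t.root := by
        intro hh
        rw [hh, rk_root] at hwx
        omega
      refine ⟨w, ?_, hwx⟩
      simp only [Finset.coe_filter, Set.mem_setOf_eq, Finset.mem_univ, true_and]
      exact ⟨hwr, (slot_lt_iff t hk h hwr).2 (by omega)⟩
  rw [h2, Nat.card_Ico]

/-- the set of valid codes -/
noncomputable def VSet (n k : ℕ) : Finset (Finset ℕ) :=
  @Finset.filter _ (fun T => ValidF n k T) (Classical.decPred _)
    ((Finset.range (k * n)).powersetCard (n - 1))

lemma mem_VSet {T : Finset ℕ} :
    T ∈ VSet n k ↔ (T ⊆ Finset.range (k * n) ∧ T.card = n - 1) ∧ ValidF n k T := by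
  classical
  rw [VSet]
  rw [Finset.filter_congr_decidable]
  rw [Finset.mem_filter, Finset.mem_powersetCard]

lemma Tset_mem_VSet (t : PlaneTree n k) (hk : 2 ≤ k) : TsetT t ∈ VSet n k :=
  mem_VSet.2 ⟨⟨fun x hx => Finset.mem_range.2 (TsetT_subset t hx), TsetT_card t hk⟩,
    TsetT_valid t hk⟩

lemma tree_ext {t₁ t₂ : PlaneTree n k} (h1 : t₁.root = t₂.root)
    (h2 : ∀ v (hv1 : v ≠ t₁.root) (hv2 : v ≠ t₂.root), t₁.par ⟨v, hv1⟩ = t₂.par ⟨v, hv2⟩) :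
    t₁ = t₂ := by
  obtain ⟨r1, p1, i1, e1⟩ := t₁
  obtain ⟨r2, p2, i2, e2⟩ := t₂
  simp only at h1
  subst h1
  have hp : p1 = p2 := by
    funext v
    obtain ⟨v, hv⟩ := v
    exact h2 v hv hv
  subst hp
  rfl

lemma sigmaE_root (t : PlaneTree n k) (hk : 2 ≤ k) (hn : 2 ≤ n) :
    sigmaE t hk t.root = rt hn := by
  apply Fin.ext
  show rk t t.root = 0
  exact rk_root t

/-- the encoding equivalence -/
noncomputable def theEquiv (hn : 2 ≤ n) (hk : 2 ≤ k) :
    PlaneTree n k ≃ (Equiv.Perm (Fin n) × {T : Finset ℕ // T ∈ VSet n k}) where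
  toFun t := (sigmaE t hk, ⟨TsetT t, Tset_mem_VSet t hk⟩)
  invFun p := relabel p.1.symm
    (canon hn hk p.2.1 (mem_VSet.1 p.2.2).1.2 (mem_VSet.1 p.2.2).2)
  left_inv := by
    intro t
    set σ := sigmaE t hk with hσ
    set c := canon hn hk (TsetT t) (mem_VSet.1 (Tset_mem_VSet t hk)).1.2
      (mem_VSet.1 (Tset_mem_VSet t hk)).2 with hc
    have hcard : (TsetT t).card = n - 1 := (mem_VSet.1 (Tset_mem_VSet t hk)).1.2
    have hval : ValidF n k (TsetT t) := (mem_VSet.1 (Tset_mem_VSet t hk)).2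
    apply tree_ext
    · show (relabel σ.symm c).root = t.root
      rw [relabel_root]
      have : c.root = rt hn := rfl
      rw [this, ← sigmaE_root t hk hn, ← hσ, Equiv.symm_apply_apply]
    · intro v hv1 hv2
      -- hv1 : v ≠ (relabel σ.symm c).root
      have hσv : σ v ≠ c.root := by
        intro hh
        have h0 : rk t v = 0 := congrArg Fin.val hh
        have := rk_pos t hk hv2
        omega
      have hσv' : σ.symm (σ v) ≠ (relabel σ.symm c).root := by
        rw [Equiv.symm_apply_apply]
        exact hv1
      have hre := relabel_par σ.symm c hσv hσv'
      have hcong : (relabel σ.symm c).par ⟨v, hv1⟩ =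
          (relabel σ.symm c).par ⟨σ.symm (σ v), hσv'⟩ :=
        congrArg _ (Subtype.ext (Equiv.symm_apply_apply σ v).symm)
      rw [hcong, hre]
      -- now compute c.par ⟨σ v, hσv⟩
      have hsv : sv hn (TsetT t) hcard (σ v) = slotN t v := by
        apply oi_eq_of_rank hcard
        · exact Finset.mem_image.2 ⟨v, Finset.mem_filter.2 ⟨Finset.mem_univ _, hv2⟩, rfl⟩
        · rw [slot_rank t hk hv2]
          rfl
      have hsl : slotN t v = k * rk t (pf t v) + ((t.par ⟨v, hv2⟩).2 : ℕ) := slotN_ne t hv2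
      have hk0 : 0 < k := by omega
      have hidx : ((t.par ⟨v, hv2⟩).2 : ℕ) < k := (t.par ⟨v, hv2⟩).2.isLt
      have hdiv : slotN t v / k = rk t (pf t v) := by
        rw [hsl, Nat.mul_add_div hk0, Nat.div_eq_of_lt hidx]
        omega
      have hmod : slotN t v % k = ((t.par ⟨v, hv2⟩).2 : ℕ) := by
        rw [hsl, Nat.mul_add_mod, Nat.mod_eq_of_lt hidx]
      have hc1 : ((c.par ⟨σ v, hσv⟩).1 : ℕ) = rk t (pf t v) := by
        show sv hn (TsetT t) hcard (σ v) / k = rk t (pf t v)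
        rw [hsv, hdiv]
      have hc2 : ((c.par ⟨σ v, hσv⟩).2 : ℕ) = ((t.par ⟨v, hv2⟩).2 : ℕ) := by
        show sv hn (TsetT t) hcard (σ v) % k = _
        rw [hsv, hmod]
      have hfst : σ.symm (c.par ⟨σ v, hσv⟩).1 = pf t v := by
        have : (c.par ⟨σ v, hσv⟩).1 = σ (pf t v) := by
          apply Fin.ext
          rw [hc1]
          rfl
        rw [this, Equiv.symm_apply_apply]
      have hsnd : (c.par ⟨σ v, hσv⟩).2 = (t.par ⟨v, hv2⟩).2 := Fin.ext hc2
      rw [hfst, hsnd]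
      apply Prod.ext
      · rw [← pf_ne t hv2]
      · rfl
  right_inv := by
    rintro ⟨σ, ⟨T, hT⟩⟩
    have hcard : T.card = n - 1 := (mem_VSet.1 hT).1.2
    have hval : ValidF n k T := (mem_VSet.1 hT).2
    set c := canon hn hk T hcard hval with hc
    apply Prod.ext
    · apply Equiv.ext
      intro x
      apply Fin.ext
      show rk (relabel σ.symm c) x = ((σ x : Fin n) : ℕ)
      have h1 := rk_relabel σ.symm c (σ x)
      rw [Equiv.symm_apply_apply] at h1
      rw [h1, canon_rk]
    · apply Subtype.ext
      show TsetT (relabel σ.symm c) = T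
      rw [Tset_relabel, hc, canon_Tset]

end PTaux

namespace PTaux
variable {n k : ℕ}

/-- indicator count -/
def cntS (N' : ℕ) (S : Finset ℕ) (t : ℕ) : ℕ :=
  ∑ j ∈ Finset.range t, if j % N' ∈ S then 1 else 0

/-- the height function -/
def HS (k N' : ℕ) (S : Finset ℕ) (t : ℕ) : ℤ := (k : ℤ) * cntS N' S t - t

lemma cnt_add (N' : ℕ) (S : Finset ℕ) (a b : ℕ) :
    cntS N' S (a + b) = cntS N' S a + ∑ j ∈ Finset.range b, (if (a + j) % N' ∈ S then 1 else 0) :=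
  Finset.sum_range_add _ a b

lemma cnt_N (N' : ℕ) (S : Finset ℕ) (hS : S ⊆ Finset.range N') :
    cntS N' S N' = S.card := by
  classical
  rw [cntS]
  have h1 : ∑ j ∈ Finset.range N', (if j % N' ∈ S then 1 else 0) =
      ∑ j ∈ Finset.range N', (if j ∈ S then 1 else 0) := by
    apply Finset.sum_congr rfl
    intro j hj
    rw [Nat.mod_eq_of_lt (Finset.mem_range.1 hj)]
  rw [h1, ← Finset.card_filter]
  rw [Finset.filter_mem_eq_inter, Finset.inter_comm, Finset.inter_eq_left.2 hS]

lemma cnt_period (N' : ℕ) (S : Finset ℕ) (hS : S ⊆ Finset.range N') (t : ℕ) :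
    cntS N' S (t + N') = cntS N' S t + S.card := by
  induction t with
  | zero =>
    have h0 : cntS N' S 0 = 0 := by simp [cntS]
    rw [Nat.zero_add, cnt_N N' S hS, h0, Nat.zero_add]
  | succ t ih =>
    have e1 : t + 1 + N' = (t + N') + 1 := by omega
    have hL : cntS N' S ((t + N') + 1) =
        cntS N' S (t + N') + (if (t + N') % N' ∈ S then 1 else 0) :=
      Finset.sum_range_succ _ _
    have hR : cntS N' S (t + 1) = cntS N' S t + (if t % N' ∈ S then 1 else 0) :=
      Finset.sum_range_succ _ _
    rw [e1, hL, ih, hR, Nat.add_mod_right]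
    ring

lemma H_period (hn : 2 ≤ n) (S : Finset ℕ) (hS : S ⊆ Finset.range (k * n))
    (hcard : S.card = n - 1) (t : ℕ) :
    HS k (k * n) S (t + k * n) = HS k (k * n) S t - k := by
  rw [HS, HS, cnt_period (k * n) S hS t, hcard]
  have h1 : ((n : ℤ) - 1) = ((n - 1 : ℕ) : ℤ) := by
    have : 1 ≤ n := by omega
    push_cast [this]
    ring
  push_cast
  rw [← h1]
  push_cast
  ring

lemma H_kdvd (S : Finset ℕ) (a m : ℕ) :
    (k : ℤ) ∣ HS k (k * n) S (a + k * m) - HS k (k * n) S a := by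
  induction m with
  | zero => simp
  | succ m ih =>
    have e1 : a + k * (m + 1) = (a + k * m) + k := by ring
    rw [e1]
    have h2 : (k : ℤ) ∣ HS k (k * n) S ((a + k * m) + k) - HS k (k * n) S (a + k * m) := by
      rw [HS, HS, cnt_add (k * n) S (a + k * m) k]
      push_cast
      refine ⟨(∑ j ∈ Finset.range k, if ((a + k * m + j) % (k * n) ∈ S) then (1:ℤ) else 0) - 1, ?_⟩
      ring
    have := dvd_add h2 ih
    simpa using this

/-- the window condition -/
def goodQ (k N' : ℕ) (S : Finset ℕ) (c : ℕ) : Prop :=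
  ∀ m, m < N' / k → HS k N' S c ≤ HS k N' S (c + k * m)

lemma goodQ_def (hk : 0 < k) (S : Finset ℕ) (c : ℕ) :
    goodQ k (k * n) S c ↔ ∀ m, m < n → HS k (k * n) S c ≤ HS k (k * n) S (c + k * m) := by
  rw [goodQ, Nat.mul_div_cancel_left n hk]

lemma goodQ_period (hn : 2 ≤ n) (hk : 2 ≤ k) (S : Finset ℕ) (hS : S ⊆ Finset.range (k * n))
    (hcard : S.card = n - 1) (t : ℕ) :
    goodQ k (k * n) S (t + k * n) ↔ goodQ k (k * n) S t := by
  have hk0 : 0 < k := by omega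
  rw [goodQ_def hk0, goodQ_def hk0]
  constructor
  · intro h m hm
    have := h m hm
    have e1 : t + k * n + k * m = (t + k * m) + k * n := by ring
    rw [e1, H_period hn S hS hcard, H_period hn S hS hcard] at this
    omega
  · intro h m hm
    have := h m hm
    have e1 : t + k * n + k * m = (t + k * m) + k * n := by ring
    rw [e1, H_period hn S hS hcard, H_period hn S hS hcard]
    omega

/-- existence of a good shift in each residue class -/
lemma goodQ_exists (hn : 2 ≤ n) (hk : 2 ≤ k) (S : Finset ℕ) (hS : S ⊆ Finset.range (k * n))
    (hcard : S.card = n - 1) (r : ℕ) :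
    ∃ t, t < n ∧ goodQ k (k * n) S (r + k * t) := by
  classical
  have hk0 : 0 < k := by omega
  set Q : ℕ → ℤ := fun t => HS k (k * n) S (r + k * t) with hQ
  have hPex : ∃ t, t < n ∧ ∀ u, u < n → Q t ≤ Q u := by
    obtain ⟨t₀, ht₀, hmin⟩ := Finset.exists_min_image (Finset.range n) Q
      ⟨0, Finset.mem_range.2 (by omega)⟩
    exact ⟨t₀, Finset.mem_range.1 ht₀, fun u hu => hmin u (Finset.mem_range.2 hu)⟩
  set t₀ := Nat.find hPex with ht₀def
  obtain ⟨ht₀n, hmin⟩ := Nat.find_spec hPex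
  have hfirst : ∀ t', t' < t₀ → Q t₀ < Q t' := by
    intro t' ht'
    have hne := Nat.find_min hPex ht'
    have ht'n : t' < n := by omega
    have hge : Q t₀ ≤ Q t' := hmin t' ht'n
    rcases lt_or_eq_of_le hge with h | h
    · exact h
    · exfalso
      apply hne
      refine ⟨ht'n, fun u hu => ?_⟩
      rw [← h]
      exact hmin u hu
  refine ⟨t₀, ht₀n, ?_⟩
  rw [goodQ_def hk0]
  intro m hm
  show HS k (k * n) S (r + k * t₀) ≤ HS k (k * n) S (r + k * t₀ + k * m)
  by_cases hcase : t₀ + m < n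
  · have : r + k * t₀ + k * m = r + k * (t₀ + m) := by ring
    rw [this]
    exact hmin (t₀ + m) hcase
  · set u := t₀ + m - n with hu
    have hult : u < t₀ := by omega
    have e1 : r + k * t₀ + k * m = (r + k * u) + k * n := by
      have : t₀ + m = u + n := by omega
      calc r + k * t₀ + k * m = r + k * (t₀ + m) := by ring
        _ = r + k * (u + n) := by rw [this]
        _ = (r + k * u) + k * n := by ring
    rw [e1, H_period hn S hS hcard]
    have hlt : Q t₀ < Q u := hfirst u hult
    have hdvd : (k : ℤ) ∣ Q u - Q t₀ := by
      have d1 := H_kdvd (n := n) (k := k) S r u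
      have d2 := H_kdvd (n := n) (k := k) S r t₀
      have := dvd_sub d1 d2
      simpa [hQ] using this
    have hge : (k : ℤ) ≤ Q u - Q t₀ := Int.le_of_dvd (by omega) hdvd
    show Q t₀ ≤ Q u - k
    omega

/-- uniqueness of the good shift in each residue class -/
lemma goodQ_unique (hn : 2 ≤ n) (hk : 2 ≤ k) (S : Finset ℕ) (hS : S ⊆ Finset.range (k * n))
    (hcard : S.card = n - 1) (r : ℕ) {t₁ t₂ : ℕ} (h1 : t₁ < n) (h2 : t₂ < n)
    (hg1 : goodQ k (k * n) S (r + k * t₁)) (hg2 : goodQ k (k * n) S (r + k * t₂)) :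
    t₁ = t₂ := by
  have hk0 : 0 < k := by omega
  rw [goodQ_def hk0] at hg1 hg2
  by_contra hne
  -- wlog t₁ < t₂
  wlog hlt : t₁ < t₂ generalizing t₁ t₂
  · exact this h2 h1 hg2 hg1 (fun hh => hne hh.symm) (by omega)
  have hA : HS k (k * n) S (r + k * t₁) ≤ HS k (k * n) S (r + k * t₂) := by
    have := hg1 (t₂ - t₁) (by omega)
    have e : r + k * t₁ + k * (t₂ - t₁) = r + k * t₂ := by
      have : t₁ + (t₂ - t₁) = t₂ := by omega
      calc r + k * t₁ + k * (t₂ - t₁) = r + k * (t₁ + (t₂ - t₁)) := by ring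
        _ = r + k * t₂ := by rw [this]
    rwa [e] at this
  have hB : HS k (k * n) S (r + k * t₂) ≤ HS k (k * n) S (r + k * t₁) - k := by
    have := hg2 (t₁ + n - t₂) (by omega)
    have e : r + k * t₂ + k * (t₁ + n - t₂) = (r + k * t₁) + k * n := by
      have : t₂ + (t₁ + n - t₂) = t₁ + n := by omega
      calc r + k * t₂ + k * (t₁ + n - t₂) = r + k * (t₂ + (t₁ + n - t₂)) := by ring
        _ = r + k * (t₁ + n) := by rw [this]
        _ = (r + k * t₁) + k * n := by ring
    rw [e, H_period hn S hS hcard] at this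
    exact this
  have : (0:ℤ) < k := by positivity
  omega

/-- exactly k good shifts in a full period -/
lemma goodQ_count (hn : 2 ≤ n) (hk : 2 ≤ k) (S : Finset ℕ) (hS : S ⊆ Finset.range (k * n))
    (hcard : S.card = n - 1) :
    (@Finset.filter _ (fun c => goodQ k (k * n) S c) (Classical.decPred _)
      (Finset.range (k * n))).card = k := by
  classical
  have hk0 : 0 < k := by omega
  have hn0 : 0 < n := by omega
  have hbij : (Finset.range k).card = (@Finset.filter _ (fun c => goodQ k (k * n) S c)
      (Classical.decPred _) (Finset.range (k * n))).card := by
    apply Finset.card_bij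
      (i := fun r _ => r + Nat.find (goodQ_exists hn hk S hS hcard r) * k)
    · intro r hr
      have hspec := Nat.find_spec (goodQ_exists hn hk S hS hcard r)
      simp only [Finset.mem_filter, Finset.mem_range]
      have hrk : r < k := Finset.mem_range.1 hr
      set tf := Nat.find (goodQ_exists hn hk S hS hcard r) with htf
      constructor
      · have ht : tf < n := hspec.1
        have h2 : tf * k ≤ (n - 1) * k := Nat.mul_le_mul_right k (by omega)
        have e : (n - 1) * k + k = k * n := by
          have hn1 : n - 1 + 1 = n := by omega
          calc (n - 1) * k + k = ((n - 1) + 1) * k := by ring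
            _ = n * k := by rw [hn1]
            _ = k * n := by ring
        linarith
      · have hg := hspec.2
        have e : r + k * tf = r + tf * k := by ring
        rwa [e] at hg
    · intro r₁ hr₁ r₂ hr₂ heq
      have h1 : (r₁ + Nat.find (goodQ_exists hn hk S hS hcard r₁) * k) % k = r₁ % k :=
        Nat.add_mul_mod_self_right _ _ _
      have h2 : (r₂ + Nat.find (goodQ_exists hn hk S hS hcard r₂) * k) % k = r₂ % k :=
        Nat.add_mul_mod_self_right _ _ _
      have hr1k : r₁ < k := Finset.mem_range.1 hr₁
      have hr2k : r₂ < k := Finset.mem_range.1 hr₂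
      have : r₁ % k = r₂ % k := by rw [← h1, ← h2, heq]
      rw [Nat.mod_eq_of_lt hr1k, Nat.mod_eq_of_lt hr2k] at this
      exact this
    · intro c hc
      simp only [Finset.mem_filter, Finset.mem_range] at hc
      obtain ⟨hcN, hcg⟩ := hc
      set r := c % k with hr
      set t := c / k with ht
      have hrk : r < k := Nat.mod_lt _ hk0
      have htn : t < n := by
        rw [ht, Nat.div_lt_iff_lt_mul hk0, Nat.mul_comm n k]
        exact hcN
      have hdm : k * t + r = c := by
        rw [ht, hr]
        exact Nat.div_add_mod c k
      have hce : c = r + k * t := by omega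
      have hgood : goodQ k (k * n) S (r + k * t) := by rwa [← hce]
      have hfind := Nat.find_spec (goodQ_exists hn hk S hS hcard r)
      have huni := goodQ_unique hn hk S hS hcard r hfind.1 htn hfind.2 hgood
      refine ⟨r, Finset.mem_range.2 hrk, ?_⟩
      rw [← huni] at hce
      have hcomm : Nat.find (goodQ_exists hn hk S hS hcard r) * k =
          k * Nat.find (goodQ_exists hn hk S hS hcard r) := Nat.mul_comm _ _
      omega
  rw [Finset.card_range] at hbij
  exact hbij.symm

end PTaux

namespace PTaux
variable {n k : ℕ}

/-- cyclic shift of a slot set -/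
def shiftF (N' c : ℕ) (S : Finset ℕ) : Finset ℕ := S.image (fun x => (x + c) % N')

lemma key1 {N' c x : ℕ} (hc : c ≤ N') (hx : x < N') :
    (N' - c + (x + c) % N') % N' = x := by
  rw [Nat.add_mod_mod]
  have e : N' - c + (x + c) = x + N' := by omega
  rw [e, Nat.add_mod_right, Nat.mod_eq_of_lt hx]

lemma key2 {N' c j : ℕ} (hc : c ≤ N') (hj : j < N') :
    ((N' - c + j) % N' + c) % N' = j := by
  rw [Nat.mod_add_mod]
  have e : N' - c + j + c = j + N' := by omega
  rw [e, Nat.add_mod_right, Nat.mod_eq_of_lt hj]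

lemma shift_filter_eq (hn : 2 ≤ n) (hk : 2 ≤ k) {S : Finset ℕ}
    (hS : S ⊆ Finset.range (k * n)) {c m : ℕ} (hc : c ≤ k * n) (hm : m < n) :
    (shiftF (k * n) c S).filter (· < k * m) =
      (Finset.range (k * m)).filter (fun j => ((k * n - c) + j) % (k * n) ∈ S) := by
  classical
  have hkm : k * m < k * n := by
    have h1 : k * (m + 1) ≤ k * n := Nat.mul_le_mul_left k hm
    have h2 : k * (m + 1) = k * m + k := by ring
    omega
  apply Finset.ext
  intro y
  simp only [Finset.mem_filter, shiftF, Finset.mem_image, Finset.mem_range]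
  constructor
  · rintro ⟨⟨x, hxS, rfl⟩, hy⟩
    have hx : x < k * n := Finset.mem_range.1 (hS hxS)
    refine ⟨hy, ?_⟩
    rw [key1 hc hx]
    exact hxS
  · rintro ⟨hy, hmem⟩
    have hyN : y < k * n := by omega
    refine ⟨⟨(k * n - c + y) % (k * n), hmem, ?_⟩, hy⟩
    rw [key2 hc hyN]

lemma valid_shift_iff (hn : 2 ≤ n) (hk : 2 ≤ k) {S : Finset ℕ}
    (hS : S ⊆ Finset.range (k * n)) (hcard : S.card = n - 1) {c : ℕ} (hc : c ≤ k * n) :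
    ValidF n k (shiftF (k * n) c S) ↔ goodQ k (k * n) S (k * n - c) := by
  classical
  have hk0 : 0 < k := by omega
  rw [goodQ_def hk0]
  have hiffm : ∀ m, m < n →
      ((m ≤ ((shiftF (k * n) c S).filter (· < k * m)).card) ↔
        HS k (k * n) S (k * n - c) ≤ HS k (k * n) S ((k * n - c) + k * m)) := by
    intro m hm
    have hfil := shift_filter_eq hn hk hS hc hm
    set w : ℕ := ∑ j ∈ Finset.range (k * m),
      (if ((k * n - c) + j) % (k * n) ∈ S then 1 else 0) with hwdef
    have hcount : ((shiftF (k * n) c S).filter (· < k * m)).card = w := by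
      rw [hfil, Finset.card_filter, hwdef]
    have hcnt : cntS (k * n) S ((k * n - c) + k * m) = cntS (k * n) S (k * n - c) + w :=
      cnt_add _ _ _ _
    have hkpos : (0:ℤ) < k := by positivity
    constructor
    · intro h
      rw [hcount] at h
      have hmw : (m:ℤ) ≤ (w:ℤ) := by exact_mod_cast h
      rw [HS, HS, hcnt]
      push_cast
      nlinarith [hmw]
    · intro h
      rw [HS, HS, hcnt] at h
      push_cast at h
      have h2 : (k:ℤ) * m ≤ (k:ℤ) * w := by linarith
      have h3 : (m:ℤ) ≤ (w:ℤ) := le_of_mul_le_mul_left h2 hkpos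
      rw [hcount]
      exact_mod_cast h3
  constructor
  · intro h m hm
    exact (hiffm m hm).1 (h m hm)
  · intro h m hm
    exact (hiffm m hm).2 (h m hm)

lemma valid_iff_good_mod (hn : 2 ≤ n) (hk : 2 ≤ k) {S : Finset ℕ}
    (hS : S ⊆ Finset.range (k * n)) (hcard : S.card = n - 1) {c : ℕ} (hc : c < k * n) :
    ValidF n k (shiftF (k * n) c S) ↔ goodQ k (k * n) S ((k * n - c) % (k * n)) := by
  have hN0 : 0 < k * n := by positivity
  by_cases h0 : c = 0
  · subst h0
    have e1 : k * n - 0 = k * n := by omega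
    have e2 : (k * n - 0) % (k * n) = 0 := by
      rw [e1, Nat.mod_self]
    rw [e2, valid_shift_iff hn hk hS hcard (by omega), e1]
    have := goodQ_period hn hk S hS hcard 0
    simpa using this
  · have e : (k * n - c) % (k * n) = k * n - c := Nat.mod_eq_of_lt (by omega)
    rw [e, valid_shift_iff hn hk hS hcard (by omega)]

lemma mod_invol {N' : ℕ} (hN : 0 < N') {c : ℕ} (hc : c < N') :
    (N' - (N' - c) % N') % N' = c := by
  by_cases h0 : c = 0
  · subst h0
    simp
  · have e1 : (N' - c) % N' = N' - c := Nat.mod_eq_of_lt (by omega)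
    rw [e1]
    have e2 : N' - (N' - c) = c := by omega
    rw [e2, Nat.mod_eq_of_lt hc]

/-- THE CYCLE LEMMA: exactly k shifts of any (n-1)-subset are valid -/
lemma cycle_lemma (hn : 2 ≤ n) (hk : 2 ≤ k) {S : Finset ℕ}
    (hS : S ⊆ Finset.range (k * n)) (hcard : S.card = n - 1) :
    (@Finset.filter _ (fun c => ValidF n k (shiftF (k * n) c S)) (Classical.decPred _)
      (Finset.range (k * n))).card = k := by
  classical
  have hN0 : 0 < k * n := by positivity
  have hbij : (@Finset.filter _ (fun c => ValidF n k (shiftF (k * n) c S)) (Classical.decPred _)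
      (Finset.range (k * n))).card = (@Finset.filter _ (fun c => goodQ k (k * n) S c)
      (Classical.decPred _) (Finset.range (k * n))).card := by
    apply Finset.card_nbij' (i := fun c => (k * n - c) % (k * n))
      (j := fun c => (k * n - c) % (k * n))
    · intro c hcm
      simp only [Finset.mem_coe, Finset.mem_filter, Finset.mem_range] at hcm ⊢
      refine ⟨Nat.mod_lt _ hN0, ?_⟩
      exact (valid_iff_good_mod hn hk hS hcard hcm.1).1 hcm.2
    · intro c hcm
      simp only [Finset.mem_coe, Finset.mem_filter, Finset.mem_range] at hcm ⊢
      refine ⟨Nat.mod_lt _ hN0, ?_⟩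
      have h1 : (k * n - (k * n - c) % (k * n)) % (k * n) = c := mod_invol hN0 hcm.1
      have h2 := valid_iff_good_mod hn hk hS hcard (c := (k * n - c) % (k * n)) (Nat.mod_lt _ hN0)
      rw [h1] at h2
      exact h2.2 hcm.2
    · intro c hcm
      simp only [Finset.mem_coe, Finset.mem_filter, Finset.mem_range] at hcm
      exact mod_invol hN0 hcm.1
    · intro c hcm
      simp only [Finset.mem_coe, Finset.mem_filter, Finset.mem_range] at hcm
      exact mod_invol hN0 hcm.1
  rw [hbij, goodQ_count hn hk S hS hcard]

end PTaux

namespace PTaux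
variable {n k : ℕ}

lemma shift_inj_on {N' c : ℕ} {x y : ℕ} (hx : x < N') (hy : y < N')
    (h : (x + c) % N' = (y + c) % N') : x = y := by
  have hm : x + c ≡ y + c [MOD N'] := h
  have := Nat.ModEq.add_right_cancel' c hm
  have hxy : x % N' = y % N' := this
  rwa [Nat.mod_eq_of_lt hx, Nat.mod_eq_of_lt hy] at hxy

lemma shift_shift_cancel {N' a b : ℕ} (hab : (a + b) % N' = 0) {X : Finset ℕ}
    (hX : X ⊆ Finset.range N') : shiftF N' b (shiftF N' a X) = X := by
  classical
  rw [shiftF, shiftF, Finset.image_image]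
  have : ∀ x ∈ X, ((fun y => (y + b) % N') ∘ (fun y => (y + a) % N')) x = id x := by
    intro x hx
    have hxN : x < N' := Finset.mem_range.1 (hX hx)
    show ((x + a) % N' + b) % N' = x
    rw [Nat.mod_add_mod]
    obtain ⟨q, hq⟩ : N' ∣ a + b := Nat.dvd_of_mod_eq_zero hab
    have e : x + a + b = x + N' * q := by omega
    rw [e, Nat.mul_comm, Nat.add_mul_mod_self_right, Nat.mod_eq_of_lt hxN]
  rw [Finset.image_congr this, Finset.image_id]

lemma cancel_pair {N' c : ℕ} (hN : 0 < N') (hc : c < N') :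
    (c + (N' - c) % N') % N' = 0 ∧ ((N' - c) % N' + c) % N' = 0 := by
  by_cases h0 : c = 0
  · subst h0
    simp
  · have e : (N' - c) % N' = N' - c := Nat.mod_eq_of_lt (by omega)
    rw [e]
    constructor
    · have : c + (N' - c) = N' := by omega
      rw [this, Nat.mod_self]
    · have : N' - c + c = N' := by omega
      rw [this, Nat.mod_self]

lemma shift_mem_P (hn : 2 ≤ n) (hk : 2 ≤ k) {S : Finset ℕ}
    (hmem : S ∈ (Finset.range (k * n)).powersetCard (n - 1)) (c : ℕ) :
    shiftF (k * n) c S ∈ (Finset.range (k * n)).powersetCard (n - 1) := by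
  classical
  have hN0 : 0 < k * n := by positivity
  rw [Finset.mem_powersetCard] at hmem ⊢
  constructor
  · intro y hy
    rw [shiftF, Finset.mem_image] at hy
    obtain ⟨x, _, rfl⟩ := hy
    exact Finset.mem_range.2 (Nat.mod_lt _ hN0)
  · rw [shiftF, Finset.card_image_of_injOn, hmem.2]
    intro x hx y hy hxy
    exact shift_inj_on (Finset.mem_range.1 (hmem.1 hx)) (Finset.mem_range.1 (hmem.1 hy)) hxy

/-- double counting -/
lemma double_count (hn : 2 ≤ n) (hk : 2 ≤ k) :
    (k * n) * (VSet n k).card = k * ((k * n).choose (n - 1)) := by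
  classical
  have hN0 : 0 < k * n := by positivity
  set P := (Finset.range (k * n)).powersetCard (n - 1) with hP
  have hA1 : ∑ S ∈ P, (@Finset.filter _ (fun c => ValidF n k (shiftF (k * n) c S))
      (Classical.decPred _) (Finset.range (k * n))).card = P.card * k := by
    rw [Finset.sum_congr rfl (fun S hS => ?_), Finset.sum_const, smul_eq_mul]
    rw [hP, Finset.mem_powersetCard] at hS
    exact cycle_lemma hn hk hS.1 hS.2
  have hA2 : ∑ S ∈ P, (@Finset.filter _ (fun c => ValidF n k (shiftF (k * n) c S))
      (Classical.decPred _) (Finset.range (k * n))).card =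
      ∑ c ∈ Finset.range (k * n), (@Finset.filter _
        (fun S => ValidF n k (shiftF (k * n) c S)) (Classical.decPred _) P).card := by
    have e1 : ∀ S, (@Finset.filter _ (fun c => ValidF n k (shiftF (k * n) c S))
        (Classical.decPred _) (Finset.range (k * n))).card =
        ∑ c ∈ Finset.range (k * n), if ValidF n k (shiftF (k * n) c S) then 1 else 0 :=
      fun S => Finset.card_filter _ _
    have e2 : ∀ c, (@Finset.filter _ (fun S => ValidF n k (shiftF (k * n) c S))
        (Classical.decPred _) P).card =
        ∑ S ∈ P, if ValidF n k (shiftF (k * n) c S) then 1 else 0 :=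
      fun c => Finset.card_filter _ _
    simp only [e1, e2]
    exact Finset.sum_comm
  have hA3 : ∀ c ∈ Finset.range (k * n), (@Finset.filter _
      (fun S => ValidF n k (shiftF (k * n) c S)) (Classical.decPred _) P).card =
      (VSet n k).card := by
    intro c hc
    have hcN : c < k * n := Finset.mem_range.1 hc
    obtain ⟨hab1, hab2⟩ := cancel_pair hN0 hcN
    apply Finset.card_bij (i := fun S _ => shiftF (k * n) c S)
    · intro S hS
      simp only [Finset.mem_filter] at hS
      rw [VSet]
      rw [Finset.mem_filter]
      exact ⟨shift_mem_P hn hk hS.1 c, hS.2⟩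
    · intro S₁ hS₁ S₂ hS₂ heq
      simp only [Finset.mem_filter] at hS₁ hS₂
      have h1 := shift_shift_cancel hab1 (Finset.mem_powersetCard.1 hS₁.1).1
      have h2 := shift_shift_cancel hab1 (Finset.mem_powersetCard.1 hS₂.1).1
      rw [← h1, ← h2, heq]
    · intro T hT
      rw [VSet, Finset.mem_filter] at hT
      refine ⟨shiftF (k * n) ((k * n - c) % (k * n)) T, ?_, ?_⟩
      · refine Finset.mem_filter.2 ⟨shift_mem_P hn hk hT.1 _, ?_⟩
        rw [shift_shift_cancel hab2 (Finset.mem_powersetCard.1 hT.1).1]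
        exact hT.2
      · rw [shift_shift_cancel hab2 (Finset.mem_powersetCard.1 hT.1).1]
  rw [hA2] at hA1
  rw [Finset.sum_congr rfl hA3, Finset.sum_const, smul_eq_mul, Finset.card_range] at hA1
  rw [hA1, hP, Finset.card_powersetCard, Finset.card_range, Nat.mul_comm]

end PTaux

/-- the number of labeled rooted plane `k`-ary trees on `n`
nodes equals `(kn)(kn-1)⋯(kn-n+2) = ∏_{i=0}^{n-2} (kn - i)`, the number of
injective functions from `{1,…,n-1}` to `{1,…,kn}`. -/
theorem card_planeTree (n k : ℕ) (hn : 2 ≤ n) (hk : 2 ≤ k) :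
    Nat.card (PlaneTree n k) = ∏ i ∈ Finset.range (n - 1), (k * n - i) := by
  classical
  have hn0 : 0 < n := by omega
  have hk0 : 0 < k := by omega
  have hNcard : Nat.card (PlaneTree n k) = n.factorial * (PTaux.VSet n k).card := by
    rw [Nat.card_congr (PTaux.theEquiv hn hk), Nat.card_prod, Nat.card_eq_fintype_card,
      Nat.card_eq_fintype_card, Fintype.card_perm, Fintype.card_fin, Fintype.card_coe]
  have hdc := PTaux.double_count hn hk
  have hnV : n * (PTaux.VSet n k).card = (k * n).choose (n - 1) := by
    apply Nat.eq_of_mul_eq_mul_left hk0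
    rw [← mul_assoc, hdc]
  have hprod : ∏ i ∈ Finset.range (n - 1), (k * n - i) = (k * n).descFactorial (n - 1) :=
    (Nat.descFactorial_eq_prod_range (k * n) (n - 1)).symm
  rw [hprod, Nat.descFactorial_eq_factorial_mul_choose, ← hnV, hNcard]
  rw [← Nat.mul_factorial_pred (by omega : n ≠ 0)]
  ring
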